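/- Under the hypotheses of type-D cancellation over a unital dg-algebra A over 𝔽₂, with h the map having sole nonzero coefficient h_{yx} = c_{xy}^{-1}, the composite g ∘ f satisfies (g∘f)_{ab} = δ_{ab}·1 + (h∘δ¹ + δ¹∘h)_{ab} for all a, b ∈ G, where (h∘δ¹)_{ab} = Σ_c c_{ac} h_{cb} and (δ¹∘h)_{ab} = Σ_c h_{ac} c_{cb}. -/
import Mathlib


/-- Type-D cancellation over a unital dg-algebra `A` over `𝔽₂`: with `f`, `g`
as in the cancellation lemma and `h` the map with sole nonzero coefficient
`h_{yx} = c_{xy}⁻¹`, the composite `g ∘ f` satisfies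
`(g∘f)_{ab} = δ_{ab}·1 + (h∘δ¹ + δ¹∘h)_{ab}` for all `a, b ∈ G`, where
`(h∘δ¹)_{ab} = ∑_c c_{ac} h_{cb}` and `(δ¹∘h)_{ab} = ∑_c h_{ac} c_{cb}`. -/
theorem typeD_cancellation_g_comp_f
    {A : Type*} [Ring A] [Algebra (ZMod 2) A]
    (d : A →+ A)
    (hleib : ∀ a b : A, d (a * b) = d a * b + a * d b)
    (hd2 : ∀ a : A, d (d a) = 0)
    {G : Type*} [Fintype G] [DecidableEq G]
    (c : G → G → A)
    (hstr : ∀ a b : G, d (c a b) + ∑ e : G, c a e * c e b = 0)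
    (x y : G) (hxy : x ≠ y)
    (u : Aˣ) (hu : (u : A) = c x y) (hdu : d (c x y) = 0) :
    ∀ a b : G,
      ∑ e : {g : G // g ≠ x ∧ g ≠ y},
        ((if a = y then ((u⁻¹ : Aˣ) : A) * c x ↑e else 0)
            + (if a = ↑e then 1 else 0))
          * ((if (↑e : G) = b then (1 : A) else 0)
            + (if b = x then c ↑e y * ((u⁻¹ : Aˣ) : A) else 0))
        = (if a = b then 1 else 0)
          + (∑ e : G, c a e * (if e = y ∧ b = x then ((u⁻¹ : Aˣ) : A) else 0))
          + (∑ e : G, (if a = y ∧ e = x then ((u⁻¹ : Aˣ) : A) else 0) * c e b) := by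
  intro a b
  obtain ⟨v, hv⟩ : ∃ w : A, ((u⁻¹ : Aˣ) : A) = w := ⟨_, rfl⟩
  rw [hv]
  have h2 : (2 : A) = 0 := by
    have h := map_natCast (algebraMap (ZMod 2) A) 2
    rw [show ((2 : ℕ) : ZMod 2) = 0 from rfl] at h
    simpa using h.symm
  have ch : ∀ t : A, t + t = 0 := fun t => by rw [← two_mul, h2, zero_mul]
  have neg : ∀ s t : A, s + t = 0 → s = t := fun s t h => by
    have h1 : s = s + (t + t) := by rw [ch, add_zero]
    rw [h1, ← add_assoc, h, zero_add]
  have huv : c x y * v = 1 := by rw [← hv, ← hu]; exact u.mul_inv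
  have hvu : v * c x y = 1 := by rw [← hv, ← hu]; exact u.inv_mul
  have hsum : ∑ e : G, c x e * c e y = 0 := by
    have h := hstr x y; rwa [hdu, zero_add] at h
  have key : ∀ F : G → A, (∑ e : {g : G // g ≠ x ∧ g ≠ y}, F ↑e)
      = ∑ e ∈ Finset.univ.filter (fun g => g ≠ x ∧ g ≠ y), F e :=
    fun F => (Finset.sum_subtype _ (by simp) F).symm
  rw [key (fun e => ((if a = y then v * c x e else 0) + if a = e then 1 else 0)
    * ((if e = b then (1:A) else 0) + if b = x then c e y * v else 0))]
  have hsplit : ∑ e ∈ Finset.univ.filter (fun g => g ≠ x ∧ g ≠ y), c x e * c e y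
      = c x x * c x y + c x y * c y y := by
    have h := hsum
    rw [← Finset.sum_filter_add_sum_filter_not Finset.univ (fun g => g ≠ x ∧ g ≠ y)
      (fun e => c x e * c e y)] at h
    have hnot : Finset.univ.filter (fun g => ¬(g ≠ x ∧ g ≠ y)) = ({x, y} : Finset G) := by
      ext g; simp [not_and_or]; tauto
    rw [hnot, Finset.sum_insert (by simp [hxy]), Finset.sum_singleton] at h
    exact neg _ _ h
  have hR1 : (∑ e : G, c a e * (if e = y ∧ b = x then v else 0))
      = if b = x then c a y * v else 0 := by
    by_cases hbx : b = x <;> simp [hbx, mul_ite, Finset.sum_ite_eq']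
  have hR2 : (∑ e : G, (if a = y ∧ e = x then v else 0) * c e b)
      = if a = y then v * c x b else 0 := by
    by_cases hay : a = y <;> simp [hay, ite_mul, Finset.sum_ite_eq]
  rw [hR1, hR2]
  by_cases hax : a = x
  · rw [hax]
    have : ∀ e ∈ Finset.univ.filter (fun g => g ≠ x ∧ g ≠ y),
        ((if x = y then v * c x e else 0) + (if x = e then 1 else 0))
          * ((if e = b then (1:A) else 0) + (if b = x then c e y * v else 0)) = 0 := by
      intro e he
      simp only [Finset.mem_filter] at he
      simp [hxy, Ne.symm he.2.1]
    rw [Finset.sum_congr rfl this]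
    by_cases hbx : b = x
    · rw [hbx]
      simp only [if_pos rfl, if_neg hxy, Finset.sum_const_zero]
      rw [huv, ch, add_zero]
    · simp [hbx, Ne.symm hbx, hxy]
  · by_cases hay : a = y
    · rw [hay]
      have hI : ∀ e ∈ Finset.univ.filter (fun g => g ≠ x ∧ g ≠ y),
          ((if y = y then v * c x e else 0) + (if y = e then 1 else 0))
            * ((if e = b then (1:A) else 0) + (if b = x then c e y * v else 0))
          = (v * c x e) * ((if e = b then (1:A) else 0) + (if b = x then c e y * v else 0)) := by
        intro e he
        simp only [Finset.mem_filter] at he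
        simp [Ne.symm he.2.2]
      rw [Finset.sum_congr rfl hI]
      by_cases hbx : b = x
      · rw [hbx]
        have hI2 : ∀ e ∈ Finset.univ.filter (fun g => g ≠ x ∧ g ≠ y),
            (v * c x e) * ((if e = x then (1:A) else 0) + (if x = x then c e y * v else 0))
            = v * (c x e * c e y) * v := by
          intro e he
          simp only [Finset.mem_filter] at he
          simp [he.2.1, mul_assoc]
        rw [Finset.sum_congr rfl hI2]
        have : ∑ e ∈ Finset.univ.filter (fun g => g ≠ x ∧ g ≠ y), v * (c x e * c e y) * v
            = v * (c x x * c x y + c x y * c y y) * v := by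
          rw [← hsplit, Finset.mul_sum, Finset.sum_mul]
        rw [this]
        have heq : v * (c x x * c x y + c x y * c y y) * v
            = v * c x x + c y y * v := by
          have e1 : v * (c x x * c x y) * v = v * c x x := by
            rw [← mul_assoc, mul_assoc (v * c x x) (c x y) v, huv, mul_one]
          have e2 : v * (c x y * c y y) * v = c y y * v := by
            rw [← mul_assoc, hvu, one_mul]
          rw [mul_add, add_mul, e1, e2]
        rw [heq]
        simp [Ne.symm hxy]
        abel
      · have hI3 : ∀ e ∈ Finset.univ.filter (fun g => g ≠ x ∧ g ≠ y),
            (v * c x e) * ((if e = b then (1:A) else 0) + (if b = x then c e y * v else 0))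
            = if e = b then v * c x b else 0 := by
          intro e he
          simp only [hbx, if_false, add_zero]
          by_cases hE : e = b
          · rw [if_pos hE, if_pos hE, hE, mul_one]
          · rw [if_neg hE, if_neg hE, mul_zero]
        rw [Finset.sum_congr rfl hI3, Finset.sum_ite_eq' ]
        by_cases hby : b = y
        · rw [hby]
          rw [if_neg (fun h => (Finset.mem_filter.mp h).2.2 rfl), if_pos rfl,
            if_neg (Ne.symm hxy), if_pos rfl, hvu, add_zero]
          exact (ch 1).symm
        · simp [hbx, hby, Ne.symm hby]
    · -- a ∉ {x, y}
      have hI : ∀ e ∈ Finset.univ.filter (fun g => g ≠ x ∧ g ≠ y),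
          ((if a = y then v * c x e else 0) + (if a = e then 1 else 0))
            * ((if e = b then (1:A) else 0) + (if b = x then c e y * v else 0))
          = if a = e then ((if e = b then (1:A) else 0) + (if b = x then c e y * v else 0)) else 0 := by
        intro e he
        simp [hay, ite_mul]
      rw [Finset.sum_congr rfl hI, Finset.sum_ite_eq]
      simp [hax, hay]
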